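/- Let w ∈ ℤ^{d_1} have all positive entries and w' ∈ ℤ^{d_2} have all negative entries, with d_2 > 0. Let Γ = (ℚ_{≥0})^{d_1} × (ℚ_{>0})^{d_2} ⊆ ℚ^{d_1+d_2}. Then the intersection of Γ with any line of the form v + ℚ·(w, w') is either empty, a half-open bounded segment (if d_1 > 0), or an open half-line (if d_1 = 0); in each non-empty case its bounded Euler characteristic is 0. -/

import Mathlib

variable {V : Type} [AddCommGroup V] [Module ℚ V]

/-- A (rational) polyhedron in a `ℚ`-vector space: a finite intersection of
closed affine half-spaces. -/
def IsPolyhedron (S : Set V) : Prop :=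
  ∃ (m : ℕ) (f : Fin m → (V →ᵃ[ℚ] ℚ)), S = {v | ∀ i, 0 ≤ f i v}

/-- Constructible subsets: the Boolean algebra generated by polyhedra. -/
inductive IsConstructible : Set V → Prop
  | poly {S : Set V} : IsPolyhedron S → IsConstructible S
  | compl {S : Set V} : IsConstructible S → IsConstructible Sᶜ
  | union {S T : Set V} : IsConstructible S → IsConstructible T →
      IsConstructible (S ∪ T)

/-- `χ` is a bounded Euler characteristic: a `ℤ`-valued invariant of
constructible sets, additive on disjoint unions, assigning `1` to every
non-empty polyhedron. -/
def IsEulerChar (χ : Set V → ℤ) : Prop :=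
  (∀ A B : Set V, IsConstructible A → IsConstructible B → Disjoint A B →
    χ (A ∪ B) = χ A + χ B) ∧
  (∀ S : Set V, IsPolyhedron S → S.Nonempty → χ S = 1)

/-- The intersection of `Γ = (ℚ≥0)^{d₁} × (ℚ>0)^{d₂}` with a line
`v + ℚ·(w,w')`, where `w` has positive integer entries and `w'` has negative
integer entries, parametrized by `q ↦ v + q·(w,w')`, is either empty, a
half-open bounded segment (if `d₁ > 0`), or an open half-line (if `d₁ = 0`);
in each non-empty case its bounded Euler characteristic vanishes. -/

private def subC (c : ℚ) : ℚ →ᵃ[ℚ] ℚ :=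
  ⟨fun x => x - c, LinearMap.id, fun p v => by
    simp only [vadd_eq_add, LinearMap.id_coe, id_eq]; ring⟩

private def csub (c : ℚ) : ℚ →ᵃ[ℚ] ℚ :=
  ⟨fun x => c - x, -LinearMap.id, fun p v => by
    simp only [vadd_eq_add, LinearMap.neg_apply, LinearMap.id_coe, id_eq]; ring⟩

lemma poly_Icc (a b : ℚ) : IsPolyhedron (Set.Icc a b) := by
  refine ⟨2, ![subC a, csub b], ?_⟩
  ext x
  simp [Set.mem_Icc, Fin.forall_fin_two, subC, csub, sub_nonneg]

lemma poly_Ici (a : ℚ) : IsPolyhedron (Set.Ici a) := by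
  refine ⟨1, ![subC a], ?_⟩
  ext x
  simp [Fin.forall_fin_one, subC, sub_nonneg]

lemma poly_univ : IsPolyhedron (Set.univ : Set ℚ) :=
  ⟨0, Fin.elim0, by ext x; simp⟩

lemma constructible_inter {A B : Set ℚ} (hA : IsConstructible A)
    (hB : IsConstructible B) : IsConstructible (A ∩ B) := by
  have : A ∩ B = (Aᶜ ∪ Bᶜ)ᶜ := by rw [Set.compl_union, compl_compl, compl_compl]
  rw [this]
  exact IsConstructible.compl (IsConstructible.union hA.compl hB.compl)

lemma chi_Ico {χ : Set ℚ → ℤ} (h : IsEulerChar χ) {a b : ℚ} (hab : a < b) :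
    χ (Set.Ico a b) = 0 := by
  have hIco : IsConstructible (Set.Ico a b) := by
    have : Set.Ico a b = Set.Icc a b ∩ {b}ᶜ := by
      rw [← Set.diff_eq, Set.Icc_sdiff_right]
    rw [this]
    exact constructible_inter (IsConstructible.poly (poly_Icc a b))
      (IsConstructible.compl (IsConstructible.poly (by
        simpa [Set.Icc_self] using poly_Icc b b)))
  have hsing : IsConstructible ({b} : Set ℚ) :=
    IsConstructible.poly (by simpa [Set.Icc_self] using poly_Icc b b)
  have hdisj : Disjoint (Set.Ico a b) ({b} : Set ℚ) := by
    simp [Set.disjoint_singleton_right]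
  have hadd := h.1 _ _ hIco hsing hdisj
  rw [Set.Ico_union_right hab.le] at hadd
  have h1 : χ (Set.Icc a b) = 1 := h.2 _ (poly_Icc a b) (Set.nonempty_Icc.2 hab.le)
  have h2 : χ ({b} : Set ℚ) = 1 :=
    h.2 _ (by simpa [Set.Icc_self] using poly_Icc b b) ⟨b, rfl⟩
  omega

lemma chi_Iio {χ : Set ℚ → ℤ} (h : IsEulerChar χ) (b : ℚ) :
    χ (Set.Iio b) = 0 := by
  have hIio : IsConstructible (Set.Iio b) := by
    have : Set.Iio b = (Set.Ici b)ᶜ := by simp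
    rw [this]; exact IsConstructible.compl (IsConstructible.poly (poly_Ici b))
  have hdisj : Disjoint (Set.Iio b) (Set.Ici b) := by
    simp [Set.disjoint_left]
  have hadd := h.1 _ _ hIio (IsConstructible.poly (poly_Ici b)) hdisj
  rw [Set.Iio_union_Ici] at hadd
  have h1 : χ (Set.univ : Set ℚ) = 1 := h.2 _ poly_univ ⟨0, trivial⟩
  have h2 : χ (Set.Ici b) = 1 := h.2 _ (poly_Ici b) ⟨b, le_refl b⟩
  omega

theorem stmt9 {d1 d2 : ℕ} (hd2 : 0 < d2)
    (w : Fin d1 → ℤ) (hw : ∀ i, 0 < w i)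
    (w' : Fin d2 → ℤ) (hw' : ∀ j, w' j < 0)
    (v : (Fin d1 → ℚ) × (Fin d2 → ℚ))
    (T : Set ℚ)
    (hT : T = {q : ℚ | (∀ i, 0 ≤ v.1 i + q * (w i : ℚ)) ∧
      (∀ j, 0 < v.2 j + q * (w' j : ℚ))}) :
    (T = ∅ ∨ (0 < d1 ∧ ∃ a b : ℚ, a < b ∧ T = Set.Ico a b) ∨
      (d1 = 0 ∧ ∃ b : ℚ, T = Set.Iio b)) ∧
    (T.Nonempty → ∀ χ : Set ℚ → ℤ, IsEulerChar χ → χ T = 0) := by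
  haveI : Nonempty (Fin d2) := ⟨⟨0, hd2⟩⟩
  set b : ℚ := Finset.univ.inf' Finset.univ_nonempty
    (fun j => v.2 j / (-(w' j : ℚ))) with hb
  have key2 : ∀ (q : ℚ) j, (0 < v.2 j + q * (w' j : ℚ)) ↔
      q < v.2 j / (-(w' j : ℚ)) := by
    intro q j
    have hpos : (0 : ℚ) < -(w' j : ℚ) := by
      have := hw' j; push_cast; linarith [(by exact_mod_cast this : (w' j : ℚ) < 0)]
    rw [lt_div_iff₀ hpos, mul_neg]
    constructor <;> intro h <;> linarith
  rcases Nat.eq_zero_or_pos d1 with h0 | hpos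
  · -- d1 = 0
    haveI hE : IsEmpty (Fin d1) := by rw [h0]; exact Fin.isEmpty
    have hTeq : T = Set.Iio b := by
      ext q
      simp only [hT, Set.mem_setOf_eq, Set.mem_Iio, hb, Finset.lt_inf'_iff,
        Finset.mem_univ, true_implies]
      constructor
      · rintro ⟨-, h2⟩ j
        exact (key2 q j).1 (h2 j)
      · intro h
        exact ⟨fun i => hE.elim i, fun j => (key2 q j).2 (h j)⟩
    refine ⟨Or.inr (Or.inr ⟨h0, b, hTeq⟩), ?_⟩
    intro _ χ hχ
    rw [hTeq]
    exact chi_Iio hχ b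
  · -- d1 > 0
    haveI : Nonempty (Fin d1) := ⟨⟨0, hpos⟩⟩
    set a : ℚ := Finset.univ.sup' Finset.univ_nonempty
      (fun i => -v.1 i / (w i : ℚ)) with ha
    have key1 : ∀ (q : ℚ) i, (0 ≤ v.1 i + q * (w i : ℚ)) ↔
        -v.1 i / (w i : ℚ) ≤ q := by
      intro q i
      have hpos' : (0 : ℚ) < (w i : ℚ) := by exact_mod_cast hw i
      rw [div_le_iff₀ hpos']
      constructor <;> intro h <;> linarith
    have hTeq : T = Set.Ico a b := by
      ext q
      simp only [hT, Set.mem_setOf_eq, Set.mem_Ico, ha, hb,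
        Finset.sup'_le_iff, Finset.lt_inf'_iff, Finset.mem_univ, true_implies]
      constructor
      · rintro ⟨h1, h2⟩
        exact ⟨fun i => (key1 q i).1 (h1 i), fun j => (key2 q j).1 (h2 j)⟩
      · rintro ⟨h1, h2⟩
        exact ⟨fun i => (key1 q i).2 (h1 i), fun j => (key2 q j).2 (h2 j)⟩
    by_cases hab : a < b
    · refine ⟨Or.inr (Or.inl ⟨hpos, a, b, hab, hTeq⟩), ?_⟩
      intro _ χ hχ
      rw [hTeq]
      exact chi_Ico hχ hab
    · have hempty : T = ∅ := by rw [hTeq, Set.Ico_eq_empty hab]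
      exact ⟨Or.inl hempty, fun hne => absurd hempty (by
        exact hne.ne_empty)⟩
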